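/- There exist constants C > 0 and C₁ > 0 such that for every R ≥ 1, every x₀ ∈ ℝ² and every measurable u : ℝ² → ℝ: ∫_{ℝ²} θ_{R,x₀}(x) ( ∫_{B_R(x)} |u(y)|² dy ) dx ≤ C R⁻¹ sup_{z ∈ ℝ²} ∫_{B_R(z)} |u(y)|² dy ≤ C₁ R sup_{z ∈ ℝ²} ∫_{B_1(z)} |u(y)|² dy (inequalities in [0,∞]), where C and C₁ are independent of R, x₀ and u. -/

import Mathlib

open MeasureTheory Metric
open scoped ENNReal

noncomputable def thetaR (R : ℝ) (x₀ x : EuclideanSpace ℝ (Fin 2)) : ℝ :=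
  1 / (R ^ 3 + ‖x - x₀‖ ^ 3)

section aux

local notation "E2" => EuclideanSpace ℝ (Fin 2)

lemma finrank_E2 : Module.finrank ℝ (EuclideanSpace ℝ (Fin 2)) = 2 := by
  simp [finrank_euclideanSpace_fin]

noncomputable def Jconst : ℝ≥0∞ :=
  ∫⁻ x : EuclideanSpace ℝ (Fin 2), ENNReal.ofReal (1 / (1 + ‖x‖ ^ 3))

lemma Jconst_lt_top : Jconst < ⊤ := by
  have hfin : (∫⁻ x : E2, ENNReal.ofReal ((1 + ‖x‖) ^ (-(3:ℝ)))) < ⊤ := by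
    apply finite_integral_one_add_norm
    rw [finrank_E2]; norm_num
  have hle : Jconst ≤ 4 * ∫⁻ x : E2, ENNReal.ofReal ((1 + ‖x‖) ^ (-(3:ℝ))) := by
    unfold Jconst
    rw [← lintegral_const_mul 4 (by fun_prop)]
    apply lintegral_mono
    intro x
    have ht : (0:ℝ) ≤ ‖x‖ := norm_nonneg x
    have h1 : (0:ℝ) < 1 + ‖x‖ := by linarith
    have hrw : (1 + ‖x‖) ^ (-(3:ℝ)) = ((1 + ‖x‖) ^ (3:ℕ))⁻¹ := by
      rw [← Real.rpow_natCast (1 + ‖x‖) 3, ← Real.rpow_neg h1.le]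
      norm_num
    dsimp only
    rw [hrw]
    have h4 : (4 : ℝ≥0∞) = ENNReal.ofReal 4 := by norm_num
    rw [h4, ← ENNReal.ofReal_mul (by norm_num)]
    apply ENNReal.ofReal_le_ofReal
    have : (4:ℝ) * ((1 + ‖x‖) ^ 3)⁻¹ = 4 / (1 + ‖x‖) ^ 3 := by ring
    rw [this, div_le_div_iff₀ (by positivity) (by positivity)]
    nlinarith [sq_nonneg (‖x‖ - 1), sq_nonneg ‖x‖]
  exact lt_of_le_of_lt hle (by
    exact ENNReal.mul_lt_top (by norm_num) hfin)

/-- The integral of the weight function is `≤ (Jconst.toReal + 1) / R`. -/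
lemma theta_lintegral_le {R : ℝ} (hR : 1 ≤ R) (x₀ : EuclideanSpace ℝ (Fin 2)) :
    (∫⁻ x : E2, ENNReal.ofReal (thetaR R x₀ x)) ≤
      ENNReal.ofReal ((Jconst.toReal + 1) / R) := by
  have hR0 : (0:ℝ) < R := lt_of_lt_of_le one_pos hR
  have hR3 : (0:ℝ) < R ^ 3 := by positivity
  set f : E2 → ℝ≥0∞ := fun x => ENNReal.ofReal (1 / (R ^ 3 + ‖x‖ ^ 3)) with hf
  have hfm : Measurable f := by
    apply ENNReal.measurable_ofReal.comp
    apply Measurable.div measurable_const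
    fun_prop
  -- translation invariance
  have h1 : (∫⁻ x : E2, ENNReal.ofReal (thetaR R x₀ x)) = ∫⁻ x : E2, f x := by
    have := lintegral_add_right_eq_self (μ := volume) f (-x₀)
    rw [← this]
    exact lintegral_congr fun x => by simp [f, thetaR, sub_eq_add_neg]
  -- scaling
  have h2 : (∫⁻ x : E2, f (R • x)) =
      ENNReal.ofReal |((R:ℝ) ^ Module.finrank ℝ E2)⁻¹| * ∫⁻ x : E2, f x := by
    rw [← lintegral_map hfm (measurable_const_smul R),
      Measure.map_addHaar_smul volume (ne_of_gt hR0), lintegral_smul_measure, smul_eq_mul]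
  have h3 : (∫⁻ x : E2, f (R • x)) = ENNReal.ofReal (R ^ 3)⁻¹ * Jconst := by
    unfold Jconst
    rw [← lintegral_const_mul _ (by fun_prop)]
    congr 1 with x
    have hnorm : ‖R • x‖ = R * ‖x‖ := by
      rw [norm_smul, Real.norm_eq_abs, abs_of_pos hR0]
    rw [hf]
    simp only [hnorm]
    rw [← ENNReal.ofReal_mul (by positivity)]
    congr 1
    have : (R * ‖x‖) ^ 3 = R ^ 3 * ‖x‖ ^ 3 := by ring
    rw [this]
    have h0 : R ^ 3 + R ^ 3 * ‖x‖ ^ 3 = R ^ 3 * (1 + ‖x‖ ^ 3) := by ring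
    rw [h0]
    field_simp
  rw [h1]
  have hRfr : ((R:ℝ) ^ Module.finrank ℝ E2) = R ^ 2 := by rw [finrank_E2]
  rw [hRfr] at h2
  have habs : |((R:ℝ) ^ 2)⁻¹| = (R ^ 2)⁻¹ := abs_of_pos (by positivity)
  rw [habs] at h2
  -- deduce ∫ f = ofReal (R⁻¹) * Jconst
  have hkey : (∫⁻ x : E2, f x) = ENNReal.ofReal R⁻¹ * Jconst := by
    have h4 : ENNReal.ofReal (R ^ 2) * (ENNReal.ofReal ((R:ℝ) ^ 2)⁻¹ * ∫⁻ x : E2, f x)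
        = ENNReal.ofReal (R ^ 2) * (ENNReal.ofReal (R ^ 3)⁻¹ * Jconst) := by
      rw [← h2, h3]
    rw [← mul_assoc, ← mul_assoc, ← ENNReal.ofReal_mul (by positivity),
      ← ENNReal.ofReal_mul (by positivity)] at h4
    have e1 : R ^ 2 * ((R:ℝ) ^ 2)⁻¹ = 1 := by field_simp
    have e2 : R ^ 2 * ((R:ℝ) ^ 3)⁻¹ = R⁻¹ := by field_simp
    rw [e1, e2] at h4
    simpa using h4
  rw [hkey]
  have hJ : Jconst ≤ ENNReal.ofReal (Jconst.toReal + 1) := by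
    calc Jconst = ENNReal.ofReal Jconst.toReal := by
          rw [ENNReal.ofReal_toReal Jconst_lt_top.ne]
      _ ≤ _ := ENNReal.ofReal_le_ofReal (by linarith)
  calc ENNReal.ofReal R⁻¹ * Jconst ≤ ENNReal.ofReal R⁻¹ * ENNReal.ofReal (Jconst.toReal + 1) :=
        mul_le_mul_right hJ _
    _ = ENNReal.ofReal ((Jconst.toReal + 1) / R) := by
        rw [← ENNReal.ofReal_mul (by positivity)]
        congr 1
        field_simp

end aux

section aux2

local notation "E2" => EuclideanSpace ℝ (Fin 2)

lemma ball_lintegral_le {R : ℝ} (hR : 1 ≤ R) (h : E2 → ℝ≥0∞) (hm : Measurable h)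
    (z : E2) :
    (∫⁻ y in ball z R, h y) ≤
      ENNReal.ofReal (4 * R ^ 2) * ⨆ w : E2, ∫⁻ y in ball w 1, h y := by
  set S := ⨆ w : E2, ∫⁻ y in ball w 1, h y with hS
  set V := volume (ball (0:E2) 1) with hV
  have hV0 : V ≠ 0 := (measure_ball_pos volume 0 one_pos).ne'
  have hVt : V ≠ ⊤ := measure_ball_lt_top.ne
  set s : Set (E2 × E2) := {p | dist p.1 p.2 < 1} ∩ {p | p.2 ∈ ball z R} with hsdef
  have hs : MeasurableSet s := by
    apply IsOpen.measurableSet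
    apply IsOpen.inter
    · exact isOpen_lt (by fun_prop) continuous_const
    · exact isOpen_ball.preimage continuous_snd
  set G : E2 → E2 → ℝ≥0∞ := fun x y => s.indicator (fun p => h p.2) (x, y) with hG
  have hGm : Measurable (Function.uncurry G) := by
    have : Function.uncurry G = s.indicator (fun p => h p.2) := rfl
    rw [this]
    exact (hm.comp measurable_snd).indicator hs
  have step1 : ∀ y, (∫⁻ x, G x y) = (ball z R).indicator h y * V := by
    intro y
    have hpt : ∀ x, G x y = (ball y 1).indicator (fun _ => (ball z R).indicator h y) x := by
      intro x
      simp only [hG, hsdef, Set.indicator_apply, Set.mem_inter_iff, Set.mem_setOf_eq, mem_ball]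
      by_cases h1 : dist x y < 1 <;> by_cases h2 : dist y z < R <;> simp [h1, h2]
    simp_rw [hpt]
    rw [lintegral_indicator_const measurableSet_ball,
      Measure.addHaar_ball_center volume y]
  have step2 : (∫⁻ y, ∫⁻ x, G x y) = (∫⁻ y in ball z R, h y) * V := by
    simp_rw [step1]
    rw [lintegral_mul_const _ (hm.indicator measurableSet_ball),
      lintegral_indicator measurableSet_ball]
  have swap : (∫⁻ x, ∫⁻ y, G x y) = ∫⁻ y, ∫⁻ x, G x y :=
    lintegral_lintegral_swap hGm.aemeasurable
  have step3 : ∀ x, (∫⁻ y, G x y) ≤ (ball z (R + 1)).indicator (fun _ => S) x := by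
    intro x
    by_cases hx : x ∈ ball z (R + 1)
    · rw [Set.indicator_of_mem hx]
      calc (∫⁻ y, G x y) ≤ ∫⁻ y, (ball x 1).indicator h y := by
            apply lintegral_mono
            intro y
            by_cases hxy : (x, y) ∈ s
            · rw [hG]; dsimp only
              rw [Set.indicator_of_mem hxy]
              have hy1 : y ∈ ball x 1 := by
                have := hxy.1
                simp only [Set.mem_setOf_eq] at this
                exact mem_ball.2 (by rwa [dist_comm])
              rw [Set.indicator_of_mem hy1]
            · rw [hG]; dsimp only
              rw [Set.indicator_of_notMem hxy]
              exact zero_le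
        _ = ∫⁻ y in ball x 1, h y := lintegral_indicator measurableSet_ball h
        _ ≤ S := le_iSup (fun w : E2 => ∫⁻ y in ball w 1, h y) x
    · rw [Set.indicator_of_notMem hx]
      have hzero : ∀ y, G x y = 0 := by
        intro y
        apply Set.indicator_of_notMem
        rintro ⟨h1, h2⟩
        simp only [Set.mem_setOf_eq] at h1 h2
        apply hx
        have : dist x z < R + 1 := by
          calc dist x z ≤ dist x y + dist y z := dist_triangle x y z
            _ < 1 + R := by
                have := mem_ball.1 h2
                linarith
            _ = R + 1 := by ring
        exact mem_ball.2 this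
      simp [hzero]
  have step4 : (∫⁻ x, (ball z (R + 1)).indicator (fun _ => S) x)
      = S * volume (ball z (R + 1)) :=
    lintegral_indicator_const measurableSet_ball S
  have hvol : volume (ball z (R + 1)) = ENNReal.ofReal ((R + 1) ^ 2) * V := by
    rw [Measure.addHaar_ball volume z (by linarith : (0:ℝ) ≤ R + 1), finrank_E2]
  have key : (∫⁻ y in ball z R, h y) * V ≤ (ENNReal.ofReal (4 * R ^ 2) * S) * V := by
    calc (∫⁻ y in ball z R, h y) * V = ∫⁻ y, ∫⁻ x, G x y := step2.symm
      _ = ∫⁻ x, ∫⁻ y, G x y := swap.symm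
      _ ≤ ∫⁻ x, (ball z (R + 1)).indicator (fun _ => S) x := lintegral_mono step3
      _ = S * volume (ball z (R + 1)) := step4
      _ = S * (ENNReal.ofReal ((R + 1) ^ 2) * V) := by rw [hvol]
      _ = (ENNReal.ofReal ((R + 1) ^ 2) * S) * V := by ring
      _ ≤ (ENNReal.ofReal (4 * R ^ 2) * S) * V :=
          mul_le_mul_left (mul_le_mul_left
            (ENNReal.ofReal_le_ofReal (by nlinarith)) S) V
  exact (ENNReal.mul_le_mul_iff_left hV0 hVt).1 key

end aux2

theorem weighted_L2_ul_bound :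
    ∃ C C₁ : ℝ, 0 < C ∧ 0 < C₁ ∧
      ∀ R : ℝ, 1 ≤ R →
      ∀ x₀ : EuclideanSpace ℝ (Fin 2),
      ∀ u : EuclideanSpace ℝ (Fin 2) → ℝ, Measurable u →
        (∫⁻ x, ENNReal.ofReal (thetaR R x₀ x) *
            ∫⁻ y in Metric.ball x R, ENNReal.ofReal (|u y| ^ 2)) ≤
          ENNReal.ofReal (C / R) *
            (⨆ z : EuclideanSpace ℝ (Fin 2),
              ∫⁻ y in Metric.ball z R, ENNReal.ofReal (|u y| ^ 2)) ∧
        ENNReal.ofReal (C / R) *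
            (⨆ z : EuclideanSpace ℝ (Fin 2),
              ∫⁻ y in Metric.ball z R, ENNReal.ofReal (|u y| ^ 2)) ≤
          ENNReal.ofReal (C₁ * R) *
            ⨆ z : EuclideanSpace ℝ (Fin 2),
              ∫⁻ y in Metric.ball z 1, ENNReal.ofReal (|u y| ^ 2) := by
  refine ⟨Jconst.toReal + 1, 4 * (Jconst.toReal + 1), by positivity, by positivity, ?_⟩
  intro R hR x₀ u hu
  have hR0 : (0:ℝ) < R := lt_of_lt_of_le one_pos hR
  set C : ℝ := Jconst.toReal + 1 with hC
  have hCpos : 0 < C := by positivity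
  have hh : Measurable fun y : EuclideanSpace ℝ (Fin 2) => ENNReal.ofReal (|u y| ^ 2) := by
    fun_prop
  have hθm : Measurable fun x : EuclideanSpace ℝ (Fin 2) => ENNReal.ofReal (thetaR R x₀ x) := by
    apply ENNReal.measurable_ofReal.comp
    apply Measurable.div measurable_const
    fun_prop
  constructor
  · calc (∫⁻ x, ENNReal.ofReal (thetaR R x₀ x) *
            ∫⁻ y in Metric.ball x R, ENNReal.ofReal (|u y| ^ 2))
        ≤ ∫⁻ x, ENNReal.ofReal (thetaR R x₀ x) *
            ⨆ z : EuclideanSpace ℝ (Fin 2),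
              ∫⁻ y in Metric.ball z R, ENNReal.ofReal (|u y| ^ 2) := by
          apply lintegral_mono
          intro x
          exact mul_le_mul_right
            (le_iSup (fun z : EuclideanSpace ℝ (Fin 2) =>
              ∫⁻ y in Metric.ball z R, ENNReal.ofReal (|u y| ^ 2)) x) _
      _ = (∫⁻ x, ENNReal.ofReal (thetaR R x₀ x)) *
            ⨆ z : EuclideanSpace ℝ (Fin 2),
              ∫⁻ y in Metric.ball z R, ENNReal.ofReal (|u y| ^ 2) :=
          lintegral_mul_const _ hθm
      _ ≤ ENNReal.ofReal (C / R) *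
            ⨆ z : EuclideanSpace ℝ (Fin 2),
              ∫⁻ y in Metric.ball z R, ENNReal.ofReal (|u y| ^ 2) :=
          mul_le_mul_left (theta_lintegral_le hR x₀) _
  · have hSR : (⨆ z : EuclideanSpace ℝ (Fin 2),
        ∫⁻ y in Metric.ball z R, ENNReal.ofReal (|u y| ^ 2)) ≤
        ENNReal.ofReal (4 * R ^ 2) *
          ⨆ z : EuclideanSpace ℝ (Fin 2),
            ∫⁻ y in Metric.ball z 1, ENNReal.ofReal (|u y| ^ 2) :=
      iSup_le fun z => ball_lintegral_le hR _ hh z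
    calc ENNReal.ofReal (C / R) *
          (⨆ z : EuclideanSpace ℝ (Fin 2),
            ∫⁻ y in Metric.ball z R, ENNReal.ofReal (|u y| ^ 2))
        ≤ ENNReal.ofReal (C / R) * (ENNReal.ofReal (4 * R ^ 2) *
            ⨆ z : EuclideanSpace ℝ (Fin 2),
              ∫⁻ y in Metric.ball z 1, ENNReal.ofReal (|u y| ^ 2)) :=
          mul_le_mul_right hSR _
      _ = (ENNReal.ofReal (C / R) * ENNReal.ofReal (4 * R ^ 2)) *
            ⨆ z : EuclideanSpace ℝ (Fin 2),
              ∫⁻ y in Metric.ball z 1, ENNReal.ofReal (|u y| ^ 2) := (mul_assoc _ _ _).symm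
      _ = ENNReal.ofReal (4 * C * R) *
            ⨆ z : EuclideanSpace ℝ (Fin 2),
              ∫⁻ y in Metric.ball z 1, ENNReal.ofReal (|u y| ^ 2) := by
          rw [← ENNReal.ofReal_mul (by positivity)]
          congr 1
          field_simp
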